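/- For discrete probability distributions P and Q on a finite set U with Q(i) > 0 for all i in U, the Kullback–Leibler divergence satisfies D(P‖Q) ≥ (1/2) ∑_{i∈U} (P(i) − Q(i))². -/

import Mathlib

open Finset

lemma logA_aux {t : ℝ} (ht : 0 < t) (ht1 : t ≤ 1) :
    (t ^ 2 - 1) / (2 * t) ≤ Real.log t := by
  set f : ℝ → ℝ := fun u => Real.log u - u / 2 + (2 * u)⁻¹ with hf
  have hcont : ContinuousOn f (Set.Ioc 0 1) := by
    intro x hx
    have hx0 : x ≠ 0 := ne_of_gt hx.1
    exact (((Real.continuousAt_log hx0).sub (continuousAt_id.div_const 2)).add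
      (((continuousAt_const.mul continuousAt_id).inv₀ (by
        simpa using mul_ne_zero two_ne_zero hx0)))).continuousWithinAt
  have hdiff : DifferentiableOn ℝ f (interior (Set.Ioc 0 1)) := by
    intro x hx
    rw [interior_Ioc] at hx
    have hx0 : x ≠ 0 := ne_of_gt hx.1
    have h3 : DifferentiableAt ℝ (fun u : ℝ => (2 * u)⁻¹) x := by
      apply DifferentiableAt.inv _ (mul_ne_zero two_ne_zero hx0)
      exact (differentiableAt_const 2).mul differentiableAt_id
    exact (((Real.differentiableAt_log hx0).sub
      (differentiableAt_id.div_const 2)).add h3).differentiableWithinAt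
  have hanti : AntitoneOn f (Set.Ioc 0 1) := by
    apply antitoneOn_of_deriv_nonpos (convex_Ioc 0 1) hcont hdiff
    intro x hx
    rw [interior_Ioc] at hx
    have hx0 : 0 < x := hx.1
    have hd : HasDerivAt f (1 / x - 1 / 2 + (-2 / (2 * x) ^ 2)) x := by
      have h1 : HasDerivAt Real.log (1 / x) x := by
        simpa [one_div] using Real.hasDerivAt_log (ne_of_gt hx0)
      have h2 : HasDerivAt (fun u : ℝ => u / 2) (1 / 2) x := by
        simpa using (hasDerivAt_id x).div_const 2
      have h3 : HasDerivAt (fun u : ℝ => (2 * u)⁻¹) (-2 / (2 * x) ^ 2) x := by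
        have : HasDerivAt (fun u : ℝ => 2 * u) 2 x := by
          simpa using (hasDerivAt_id x).const_mul 2
        exact this.inv (mul_ne_zero two_ne_zero (ne_of_gt hx0))
      exact (h1.sub h2).add h3
    rw [hd.deriv]
    have heq : 1 / x - 1 / 2 + (-2 / (2 * x) ^ 2) = -((x - 1) ^ 2) / (2 * x ^ 2) := by
      field_simp
      ring
    rw [heq]
    apply div_nonpos_of_nonpos_of_nonneg
    · simpa using sq_nonneg (x - 1)
    · positivity
  have h1 : f 1 ≤ f t := hanti ⟨ht, ht1⟩ ⟨one_pos, le_refl 1⟩ ht1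
  have hf1 : f 1 = 0 := by norm_num [hf]
  have hft : f t = Real.log t - t / 2 + (2 * t)⁻¹ := rfl
  have key : (t ^ 2 - 1) / (2 * t) = t / 2 - (2 * t)⁻¹ := by
    field_simp
  rw [hf1, hft] at h1
  rw [key]
  linarith

lemma logB_aux {s : ℝ} (hs : 0 < s) (hs1 : s ≤ 1) :
    Real.log s ≤ (s - 1) * (3 - s) / 2 := by
  set g : ℝ → ℝ := fun u => (u - 1) * (3 - u) / 2 - Real.log u with hg
  have hcont : ContinuousOn g (Set.Ioc 0 1) := by
    intro x hx
    have hx0 : x ≠ 0 := ne_of_gt hx.1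
    exact ((by fun_prop : ContinuousAt (fun u : ℝ => (u - 1) * (3 - u) / 2) x).sub
      (Real.continuousAt_log hx0)).continuousWithinAt
  have hdiff : DifferentiableOn ℝ g (interior (Set.Ioc 0 1)) := by
    intro x hx
    rw [interior_Ioc] at hx
    have hx0 : x ≠ 0 := ne_of_gt hx.1
    exact ((by fun_prop : DifferentiableAt ℝ (fun u : ℝ => (u - 1) * (3 - u) / 2) x).sub
      (Real.differentiableAt_log hx0)).differentiableWithinAt
  have hanti : AntitoneOn g (Set.Ioc 0 1) := by
    apply antitoneOn_of_deriv_nonpos (convex_Ioc 0 1) hcont hdiff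
    intro x hx
    rw [interior_Ioc] at hx
    have hx0 : 0 < x := hx.1
    have hd : HasDerivAt g ((4 - 2 * x) / 2 - 1 / x) x := by
      have h1 : HasDerivAt (fun u : ℝ => (u - 1) * (3 - u) / 2) ((4 - 2 * x) / 2) x := by
        have : HasDerivAt (fun u : ℝ => (u - 1) * (3 - u))
            ((1 : ℝ) * (3 - x) + (x - 1) * (-1)) x :=
          ((hasDerivAt_id x).sub_const 1).mul ((hasDerivAt_id x).const_sub 3)
        have := this.div_const 2
        exact this.congr_deriv (by ring)
      have h2 : HasDerivAt Real.log (1 / x) x := by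
        simpa [one_div] using Real.hasDerivAt_log (ne_of_gt hx0)
      exact h1.sub h2
    rw [hd.deriv]
    have heq : (4 - 2 * x) / 2 - 1 / x = -((x - 1) ^ 2) / x := by
      field_simp
      ring
    rw [heq]
    apply div_nonpos_of_nonpos_of_nonneg
    · simpa using sq_nonneg (x - 1)
    · exact hx0.le
  have h1 : g 1 ≤ g s := hanti ⟨hs, hs1⟩ ⟨one_pos, le_refl 1⟩ hs1
  have hg1 : g 1 = 0 := by simp [hg]
  have hgs : g s = (s - 1) * (3 - s) / 2 - Real.log s := rfl
  rw [hg1, hgs] at h1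
  linarith

lemma pointwise_aux {x y : ℝ} (hx : 0 ≤ x) (hx1 : x ≤ 1) (hy : 0 < y) (hy1 : y ≤ 1) :
    (x - y) + (x - y) ^ 2 / 2 ≤ x * Real.log (x / y) := by
  rcases eq_or_lt_of_le hx with h0 | hxpos
  · rw [← h0]
    simp
    nlinarith
  rcases le_or_gt x y with hxy | hxy
  · -- t = x / y ≤ 1
    have ht : 0 < x / y := div_pos hxpos hy
    have ht1 : x / y ≤ 1 := (div_le_one hy).2 hxy
    have hA := logA_aux ht ht1
    have hmul : x * (((x / y) ^ 2 - 1) / (2 * (x / y))) ≤ x * Real.log (x / y) :=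
      mul_le_mul_of_nonneg_left hA hx
    have key : x * (((x / y) ^ 2 - 1) / (2 * (x / y))) = (x - y) * (x + y) / (2 * y) := by
      field_simp
      ring
    rw [key] at hmul
    have diff : (x - y) * (x + y) / (2 * y) - ((x - y) + (x - y) ^ 2 / 2)
        = (x - y) ^ 2 * (1 - y) / (2 * y) := by
      field_simp
      ring
    have hpos : 0 ≤ (x - y) ^ 2 * (1 - y) / (2 * y) :=
      div_nonneg (mul_nonneg (sq_nonneg _) (by linarith)) (by linarith)
    linarith
  · -- s = y / x ≤ 1
    have hs : 0 < y / x := div_pos hy hxpos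
    have hs1 : y / x ≤ 1 := (div_le_one hxpos).2 hxy.le
    have hB := logB_aux hs hs1
    have hlog : Real.log (x / y) = -Real.log (y / x) := by
      rw [← Real.log_inv]
      congr 1
      rw [inv_div]
    have hmul : x * (-((y / x - 1) * (3 - y / x) / 2)) ≤ x * Real.log (x / y) := by
      rw [hlog]
      exact mul_le_mul_of_nonneg_left (by linarith) hx
    have key : x * (-((y / x - 1) * (3 - y / x) / 2)) = (x - y) * (3 * x - y) / (2 * x) := by
      field_simp
      ring
    rw [key] at hmul
    have diff : (x - y) * (3 * x - y) / (2 * x) - ((x - y) + (x - y) ^ 2 / 2)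
        = (x - y) ^ 2 * (1 - x) / (2 * x) := by
      field_simp
      ring
    have hpos : 0 ≤ (x - y) ^ 2 * (1 - x) / (2 * x) :=
      div_nonneg (mul_nonneg (sq_nonneg _) (by linarith)) (by linarith)
    linarith

/-- Pinsker-type lower bound: for pmfs `P`, `Q` on a finite set `U` with `Q` positive on `U`,
`D(P‖Q) ≥ (1/2) ∑ (P i - Q i)^2`. -/
theorem kl_ge_half_sum_sq {ι : Type*} (U : Finset ι) (P Q : ι → ℝ)
    (hPnn : ∀ i ∈ U, 0 ≤ P i) (hPsum : ∑ i ∈ U, P i = 1)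
    (hQpos : ∀ i ∈ U, 0 < Q i) (hQsum : ∑ i ∈ U, Q i = 1) :
    ∑ i ∈ U, P i * Real.log (P i / Q i) ≥ (1 / 2) * ∑ i ∈ U, (P i - Q i) ^ 2 := by
  have hP1 : ∀ i ∈ U, P i ≤ 1 := by
    intro i hi
    calc P i ≤ ∑ j ∈ U, P j := Finset.single_le_sum hPnn hi
    _ = 1 := hPsum
  have hQ1 : ∀ i ∈ U, Q i ≤ 1 := by
    intro i hi
    calc Q i ≤ ∑ j ∈ U, Q j := Finset.single_le_sum (fun j hj => (hQpos j hj).le) hi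
    _ = 1 := hQsum
  have h1 : ∀ i ∈ U, (P i - Q i) + (P i - Q i) ^ 2 / 2 ≤ P i * Real.log (P i / Q i) :=
    fun i hi => pointwise_aux (hPnn i hi) (hP1 i hi) (hQpos i hi) (hQ1 i hi)
  have h2 := Finset.sum_le_sum h1
  rw [Finset.sum_add_distrib, Finset.sum_sub_distrib, hPsum, hQsum] at h2
  have h3 : ∑ i ∈ U, (P i - Q i) ^ 2 / 2 = (1 / 2) * ∑ i ∈ U, (P i - Q i) ^ 2 := by
    rw [Finset.mul_sum]
    apply Finset.sum_congr rfl
    intro i _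
    ring
  rw [h3] at h2
  linarith
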